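/- Let α ≥ 3 be an integer, R_c the unique positive solution of (R − 1)·g_α(R) = R^α/(α−1)!, and β_c = R_c/g_α(R_c). Then for every real β with 0 < β < β_c, the series R(β) = Σ_{n≥2} r_α(n)·β^{n−1} converges, its sum satisfies 0 < R(β) < R_c, and R(β) is the unique solution in the interval (0, R_c) of the equation R = β·g_α(R). -/

import Mathlib

open Finset

/-- The truncated exponential `g_α(R) = Σ_{γ=0}^{α−1} R^γ/γ!`. -/
noncomputable def truncExp (α : ℕ) (R : ℝ) : ℝ :=
  ∑ γ ∈ Finset.range α, R ^ γ / (Nat.factorial γ)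

/-- The number `r_α(n)` of combinatorially inequivalent rooted tree graphs with
`n` vertices, root of coordination number 1, and all coordination numbers at
most `α`, given by the paper's closed (Cayley-type) formula. -/
noncomputable def rootedTrees (α n : ℕ) : ℝ :=
  (1 / (n - 1 : ℝ)) *
    ∑ f ∈ (Fintype.piFinset fun _ : Fin (n - 1) => Finset.range α) |>.filter
        (fun f => ∑ i, f i = n - 2),
      ∏ i, (1 : ℝ) / (Nat.factorial (f i))

namespace BP


/-- weight of a word -/
noncomputable def wgt (l : List ℕ) : ℝ := (l.map fun x => ((x.factorial : ℝ))⁻¹).prod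

/-- words of length n with entries < α -/
def LF (α n : ℕ) : Finset (List ℕ) :=
  (Fintype.piFinset fun _ : Fin n => Finset.range α).image List.ofFn

/-- prefix deficit -/
def dz (l : List ℕ) (t : ℕ) : ℤ := ((l.take t).sum : ℤ) - t

/-- `Dom j l` : l is a concatenation of j nonempty "good" blocks (Łukasiewicz condition) -/
def Dom (j : ℕ) (l : List ℕ) : Prop :=
  l.sum + j = l.length ∧ ∀ t < l.length, -(j : ℤ) < dz l t

instance (j : ℕ) : DecidablePred (Dom j) := fun l => by unfold Dom; exact instDecidableAnd

noncomputable def D (α j n : ℕ) : ℝ := ∑ l ∈ (LF α n).filter (Dom j), wgt l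

noncomputable def G (α n : ℕ) : ℝ := D α 1 n

lemma mem_LF {α n : ℕ} {l : List ℕ} : l ∈ LF α n ↔ l.length = n ∧ ∀ x ∈ l, x < α := by
  simp only [LF, Finset.mem_image, Fintype.mem_piFinset, Finset.mem_range]
  constructor
  · rintro ⟨f, hf, rfl⟩
    simp only [List.length_ofFn, true_and]
    intro x hx
    obtain ⟨i, rfl⟩ := List.mem_ofFn.1 hx
    exact hf i
  · rintro ⟨rfl, h⟩
    exact ⟨l.get, fun i => h _ (l.get_mem _), List.ofFn_get l⟩

lemma wgt_nonneg (l : List ℕ) : 0 ≤ wgt l := by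
  apply List.prod_nonneg
  intro x hx
  simp only [List.mem_map] at hx
  obtain ⟨y, -, rfl⟩ := hx
  positivity

lemma wgt_append (a b : List ℕ) : wgt (a ++ b) = wgt a * wgt b := by
  simp [wgt]

lemma wgt_cons (x : ℕ) (b : List ℕ) : wgt (x :: b) = ((x.factorial : ℝ))⁻¹ * wgt b := by
  simp [wgt]

lemma D_nonneg (α j n : ℕ) : 0 ≤ D α j n :=
  Finset.sum_nonneg fun l _ => wgt_nonneg l

lemma dz_zero (l : List ℕ) : dz l 0 = 0 := by simp [dz]

lemma dz_take_le {a b : List ℕ} {t : ℕ} (h : t ≤ a.length) : dz (a ++ b) t = dz a t := by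
  simp [dz, List.take_append_of_le_length h]

lemma dz_append (a b : List ℕ) (s : ℕ) :
    dz (a ++ b) (a.length + s) = dz a a.length + dz b s := by
  simp only [dz, List.take_length_add_append, List.sum_append, List.take_length]
  push_cast
  ring

lemma dz_cons (x : ℕ) (b : List ℕ) (s : ℕ) :
    dz (x :: b) (s + 1) = (x : ℤ) - 1 + dz b s := by
  simp only [dz, List.take_succ_cons, List.sum_cons]
  push_cast
  ring

lemma dz_succ_sub (l : List ℕ) (t : ℕ) (h : t < l.length) :
    dz l t - 1 ≤ dz l (t + 1) := by
  rw [dz, dz, List.sum_take_succ _ _ h]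
  push_cast
  omega


lemma dz_drop (x : List ℕ) (r t : ℕ) : dz (x.drop r) t = dz x (r + t) - dz x r := by
  have h : x.take (r + t) = x.take r ++ (x.drop r).take t := List.take_add
  simp only [dz, h, List.sum_append]
  push_cast; ring

lemma rotate_take {l : List ℕ} {r t : ℕ} (hr : r ≤ l.length) (ht : t ≤ l.length) :
    (l.rotate r).take t = ((l ++ l).drop r).take t := by
  have hpre : l.rotate r <+: (l ++ l).drop r := by
    refine ⟨l.drop r, ?_⟩
    rw [List.rotate_eq_drop_append_take hr, List.drop_append_of_le_length hr,
      List.append_assoc, List.take_append_drop]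
  obtain ⟨u, hu⟩ := hpre
  rw [← hu, List.take_append_of_le_length (by rwa [List.length_rotate])]

lemma dz_rotate {l : List ℕ} {r t : ℕ} (hr : r ≤ l.length) (ht : t ≤ l.length) :
    dz (l.rotate r) t = dz (l ++ l) (r + t) - dz (l ++ l) r := by
  rw [← dz_drop, dz, dz, rotate_take hr ht]

lemma dz_wrap {l : List ℕ} (hsum : l.sum + 1 = l.length) {j : ℕ} (hj : j ≤ l.length) :
    dz (l ++ l) (l.length + j) = dz (l ++ l) j - 1 := by
  rw [dz_append, dz_take_le hj]
  have : dz l l.length = -1 := by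
    simp only [dz, List.take_length]
    omega
  omega

/-- the unique good-rotation lemma (cycle lemma) -/
lemma cycle {l : List ℕ} (hsum : l.sum + 1 = l.length) :
    ∃! r, r < l.length ∧ Dom 1 (l.rotate r) := by
  classical
  set m := l.length with hm
  have hm1 : 1 ≤ m := by omega
  have hwrap : ∀ j ≤ m, dz (l ++ l) (m + j) = dz (l ++ l) j - 1 := by
    rw [hm]; exact fun j hj => dz_wrap hsum hj
  set d : ℕ → ℤ := dz (l ++ l) with hd
  -- characterize goodness
  have hchar : ∀ r < m, (Dom 1 (l.rotate r) ↔ ∀ t < m, d r ≤ d (r + t)) := by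
    intro r hr
    have hlen : (l.rotate r).length = m := by rw [List.length_rotate]
    have hsum' : (l.rotate r).sum = l.sum := (l.rotate_perm r).sum_eq
    constructor
    · rintro ⟨-, h2⟩ t ht
      have h3 := h2 t (by omega)
      rw [dz_rotate (by omega) (by omega)] at h3
      simp only [hd]
      omega
    · intro h
      refine ⟨by omega, fun t ht => ?_⟩
      rw [dz_rotate (by omega) (by omega : t ≤ l.length)]
      have h3 := h t (by omega)
      simp only [hd] at h3
      omega
  -- earliest minimizer
  have hne : ((Finset.range m).image d).Nonempty := ⟨d 0, Finset.mem_image.2 ⟨0, Finset.mem_range.2 hm1, rfl⟩⟩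
  set μ := ((Finset.range m).image d).min' hne with hμ
  have hmin : ∀ j < m, μ ≤ d j := fun j hj =>
    Finset.min'_le _ _ (Finset.mem_image.2 ⟨j, Finset.mem_range.2 hj, rfl⟩)
  have hex : ∃ r, r < m ∧ d r = μ := by
    obtain ⟨j, hj, hjd⟩ := Finset.mem_image.1 (Finset.min'_mem _ hne)
    exact ⟨j, Finset.mem_range.1 hj, hjd⟩
  set r := Nat.find hex with hr
  obtain ⟨hrm, hrμ⟩ := Nat.find_spec hex
  rw [← hr] at hrm hrμ
  have hlt : ∀ j < r, μ < d j := by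
    intro j hj
    have := Nat.find_min hex hj
    have hjm : j < m := lt_trans hj hrm
    have := hmin j hjm
    omega
  refine ⟨r, ⟨hrm, (hchar r hrm).2 ?_⟩, ?_⟩
  · intro t ht
    rcases lt_or_ge (r + t) m with h | h
    · rw [hrμ]; exact hmin _ h
    · have hj : r + t - m < r := by omega
      have : r + t = m + (r + t - m) := by omega
      rw [this]
      have h4 := hwrap (r + t - m) (by omega)
      have h5 := hlt _ hj
      simp only [hd] at *
      omega
  · rintro r' ⟨hr'm, hgood⟩
    have hg := (hchar r' hr'm).1 hgood
    by_contra hne'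
    rcases lt_or_gt_of_ne hne' with h | h
    · -- r' < r
      have := hg (r - r') (by omega)
      have h2 : r' + (r - r') = r := by omega
      rw [h2, hrμ] at this
      have := hlt r' h
      omega
    · -- r < r'
      have := hg (r + m - r') (by omega)
      have h2 : r' + (r + m - r') = m + r := by omega
      rw [h2, hwrap r (by omega)] at this
      rw [hrμ] at this
      have h6 := hmin r' hr'm
      simp only [hd] at *
      omega


/-- index of the unique good rotation -/
noncomputable def grot (l : List ℕ) : ℕ :=
  if h : ∃ r, r < l.length ∧ Dom 1 (l.rotate r) then h.choose else 0

lemma grot_spec {l : List ℕ} (hsum : l.sum + 1 = l.length) :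
    grot l < l.length ∧ Dom 1 (l.rotate (grot l)) := by
  obtain ⟨r, hr, -⟩ := cycle hsum
  rw [grot, dif_pos ⟨r, hr⟩]
  exact (⟨r, hr⟩ : ∃ r, r < l.length ∧ Dom 1 (l.rotate r)).choose_spec

lemma grot_unique {l : List ℕ} (hsum : l.sum + 1 = l.length) {r : ℕ}
    (h1 : r < l.length) (h2 : Dom 1 (l.rotate r)) : r = grot l := by
  obtain ⟨r', -, hu⟩ := cycle hsum
  have e1 := hu r ⟨h1, h2⟩
  have e2 := hu (grot l) ⟨(grot_spec hsum).1, (grot_spec hsum).2⟩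
  rw [e1, e2]

lemma rotate_mem_LF {α m : ℕ} {l : List ℕ} (h : l ∈ LF α m) (r : ℕ) :
    l.rotate r ∈ LF α m := by
  rw [mem_LF] at h ⊢
  exact ⟨by rw [List.length_rotate]; exact h.1,
    fun x hx => h.2 x ((l.rotate_perm r).mem_iff.1 hx)⟩

lemma wgt_rotate (l : List ℕ) (r : ℕ) : wgt (l.rotate r) = wgt l :=
  ((l.rotate_perm r).map _).prod_eq

lemma cycle_count (α m : ℕ) :
    ∑ l ∈ (LF α m).filter (fun l => l.sum + 1 = m), wgt l = m * G α m := by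
  classical
  have hR : (m : ℝ) * G α m = ∑ p ∈ (Finset.range m) ×ˢ ((LF α m).filter (Dom 1)), wgt p.2 := by
    rw [Finset.sum_product]
    simp [G, D, mul_comm]
  rw [hR]
  refine Finset.sum_nbij' (i := fun l => ((m - grot l) % m, l.rotate (grot l)))
    (j := fun p => p.2.rotate p.1) ?_ ?_ ?_ ?_ ?_
  · -- hi : maps target → source
    intro l hl
    simp only [Finset.mem_filter] at hl
    obtain ⟨hlf, hls⟩ := hl
    have hlen : l.length = m := (mem_LF.1 hlf).1
    have hsum : l.sum + 1 = l.length := by omega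
    obtain ⟨h1, h2⟩ := grot_spec hsum
    have hm1 : 0 < m := by omega
    refine Finset.mem_product.2 ⟨Finset.mem_range.2 (Nat.mod_lt _ hm1), ?_⟩
    exact Finset.mem_filter.2 ⟨rotate_mem_LF hlf _, h2⟩
  · -- hj : maps source → target
    rintro ⟨r, g⟩ hp
    obtain ⟨hr, hg⟩ := Finset.mem_product.1 hp
    rw [Finset.mem_range] at hr
    rw [Finset.mem_filter] at hg
    obtain ⟨hglf, hgdom⟩ := hg
    have hglen : g.length = m := (mem_LF.1 hglf).1
    refine Finset.mem_filter.2 ⟨rotate_mem_LF hglf _, ?_⟩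
    show (g.rotate r).sum + 1 = m
    have h4 : (g.rotate r).sum = g.sum := (g.rotate_perm r).sum_eq
    have h5 : g.sum + 1 = g.length := hgdom.1
    omega
  · -- left_inv : j (i l) = l  (for l in target)
    intro l hl
    simp only [Finset.mem_filter] at hl
    obtain ⟨hlf, hls⟩ := hl
    have hlen : l.length = m := (mem_LF.1 hlf).1
    have hsum : l.sum + 1 = l.length := by omega
    obtain ⟨h1, -⟩ := grot_spec hsum
    show (l.rotate (grot l)).rotate ((m - grot l) % m) = l
    rw [List.rotate_rotate]
    rcases Nat.eq_zero_or_pos (grot l) with h0 | h0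
    · rw [h0, Nat.sub_zero, Nat.mod_self]
      exact List.rotate_zero l
    · rw [Nat.mod_eq_of_lt (by omega : m - grot l < m),
        (by omega : grot l + (m - grot l) = m), ← hlen, List.rotate_length]
  · -- right_inv : i (j p) = p (for p in source)
    rintro ⟨r, g⟩ hp
    obtain ⟨hr, hg⟩ := Finset.mem_product.1 hp
    rw [Finset.mem_range] at hr
    rw [Finset.mem_filter] at hg
    obtain ⟨hglf, hgdom⟩ := hg
    have hglen : g.length = m := (mem_LF.1 hglf).1
    have hgsum : g.sum + 1 = m := by
      have h5 : g.sum + 1 = g.length := hgdom.1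
      omega
    set l := g.rotate r with hldef
    have hlen : l.length = m := by rw [hldef, List.length_rotate, hglen]
    have hsum : l.sum + 1 = l.length := by
      rw [hldef, (g.rotate_perm r).sum_eq, List.length_rotate]; omega
    have hrot : l.rotate ((m - r) % m) = g := by
      rw [hldef, List.rotate_rotate]
      rcases Nat.eq_zero_or_pos r with h0 | h0
      · rw [h0]
        have : (m - 0) % m = 0 := Nat.sub_zero m ▸ Nat.mod_self m
        simp [this]
      · have h2 : (m - r) % m = m - r := Nat.mod_eq_of_lt (by omega)
        rw [h2]
        have h3 : r + (m - r) = m := by omega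
        rw [h3, ← hglen, List.rotate_length]
    have hR : (m - r) % m = grot l := by
      refine grot_unique hsum ?_ ?_
      · rw [hlen]; exact Nat.mod_lt _ (by omega)
      · rw [hrot]; exact hgdom
    have h1 : l.rotate (grot l) = g := by rw [← hR, hrot]
    have h2 : (m - grot l) % m = r := by
      rw [← hR]
      rcases Nat.eq_zero_or_pos r with h0 | h0
      · subst h0
        simp [Nat.mod_self]
      · have e2 : (m - r) % m = m - r := Nat.mod_eq_of_lt (by omega)
        rw [e2]
        have e3 : m - (m - r) = r := by omega
        rw [e3, Nat.mod_eq_of_lt hr]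
    rw [Prod.mk.injEq]
    exact ⟨h2, h1⟩
  · -- weights
    intro l _
    simp [wgt_rotate]

lemma first_hit {d : ℕ → ℤ} {c : ℤ} (h0 : c < d 0) {N : ℕ}
    (hstep : ∀ t < N, d t - 1 ≤ d (t + 1)) (hN : d N ≤ c) :
    ∃ t, t ≤ N ∧ d t = c ∧ ∀ s < t, c < d s := by
  classical
  have hex : ∃ t, t ≤ N ∧ d t ≤ c := ⟨N, le_rfl, hN⟩
  have hspec := Nat.find_spec hex
  set t := Nat.find hex with htdef
  have hmin : ∀ s < t, c < d s := by
    intro s hs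
    have h1 := Nat.find_min hex hs
    push_neg at h1
    exact h1 (le_trans (le_of_lt hs) hspec.1)
  have ht1 : 1 ≤ t := by
    rcases Nat.eq_zero_or_pos t with h | h
    · rw [h] at hspec; omega
    · exact h
  have hprev := hmin (t - 1) (by omega)
  have hstep' := hstep (t - 1) (by omega)
  have he : t - 1 + 1 = t := by omega
  rw [he] at hstep'
  exact ⟨t, hspec.1, by omega, hmin⟩

lemma hit_exists {l : List ℕ} {j : ℕ} (hdom : Dom (j + 1) l) :
    ∃ t, t ≤ l.length ∧ dz l t = -1 ∧ ∀ s < t, 0 ≤ dz l s := by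
  obtain ⟨h1, h2⟩ := hdom
  have h0 : (-1 : ℤ) < dz l 0 := by rw [dz_zero]; omega
  have hN : dz l l.length ≤ -1 := by
    rw [dz, List.take_length]; omega
  obtain ⟨t, ht1, ht2, ht3⟩ := first_hit h0 (fun t ht => dz_succ_sub l t ht) hN
  exact ⟨t, ht1, ht2, fun s hs => by have := ht3 s hs; omega⟩

/-- position of the first return to level -1 -/
noncomputable def fh (l : List ℕ) : ℕ :=
  if h : ∃ t, t ≤ l.length ∧ dz l t = -1 ∧ ∀ s < t, 0 ≤ dz l s then h.choose else 0

lemma fh_eq {l : List ℕ} {t : ℕ}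
    (ht : t ≤ l.length ∧ dz l t = -1 ∧ ∀ s < t, 0 ≤ dz l s) : fh l = t := by
  have hex : ∃ t, t ≤ l.length ∧ dz l t = -1 ∧ ∀ s < t, 0 ≤ dz l s := ⟨t, ht⟩
  rw [fh, dif_pos hex]
  obtain ⟨h1, h2, h3⟩ := hex.choose_spec
  rcases lt_trichotomy hex.choose t with h | h | h
  · have := ht.2.2 _ h; omega
  · exact h
  · have := h3 t h; have := ht.2.1; omega

lemma fh_spec {l : List ℕ} {j : ℕ} (hdom : Dom (j + 1) l) :
    fh l ≤ l.length ∧ dz l (fh l) = -1 ∧ ∀ s < fh l, 0 ≤ dz l s := by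
  have hex := hit_exists hdom
  rw [fh, dif_pos hex]
  exact hex.choose_spec

lemma LF_zero (α : ℕ) : LF α 0 = {[]} := by
  ext l
  simp only [mem_LF, Finset.mem_singleton, List.length_eq_zero_iff]
  constructor
  · rintro ⟨rfl, -⟩; rfl
  · rintro rfl; exact ⟨rfl, by simp⟩

lemma D_right_zero (α j : ℕ) : D α j 0 = if j = 0 then 1 else 0 := by
  rw [D, LF_zero]
  rcases Nat.eq_zero_or_pos j with h | h
  · subst h
    rw [Finset.filter_singleton, if_pos ⟨rfl, by simp⟩]
    simp [wgt]
  · rw [Finset.filter_singleton, if_neg, if_neg (by omega)]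
    · simp
    · intro hd
      have h2 := hd.1
      simp only [List.sum_nil, List.length_nil, Nat.zero_add] at h2
      omega

lemma D_left_zero (α n : ℕ) : D α 0 n = if n = 0 then 1 else 0 := by
  rcases Nat.eq_zero_or_pos n with h | h
  · subst h; rw [D_right_zero]
  · rw [if_neg (by omega), D]
    convert Finset.sum_empty
    rw [Finset.filter_eq_empty_iff]
    intro l hl
    have hlen : l.length = n := (mem_LF.1 hl).1
    rintro ⟨-, h2⟩
    have := h2 0 (by omega)
    rw [dz_zero] at this
    omega

lemma G_zero (α : ℕ) : G α 0 = 0 := by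
  rw [G, D_right_zero]; simp

lemma Dom_nil_length {j : ℕ} {b : List ℕ} (h : Dom j b) (hb : 0 < b.length) : 1 ≤ j := by
  rcases Nat.eq_zero_or_pos j with h0 | h0
  · subst h0
    have := h.2 0 hb
    rw [dz_zero] at this
    omega
  · exact h0

lemma D_succ (α j n : ℕ) :
    D α (j + 1) n = ∑ p ∈ Finset.HasAntidiagonal.antidiagonal n, G α p.1 * D α j p.2 := by
  classical
  have hRHS : ∑ p ∈ Finset.HasAntidiagonal.antidiagonal n, G α p.1 * D α j p.2
      = ∑ x ∈ (Finset.HasAntidiagonal.antidiagonal n).sigma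
          (fun p => ((LF α p.1).filter (Dom 1)) ×ˢ ((LF α p.2).filter (Dom j))),
          wgt x.2.1 * wgt x.2.2 := by
    rw [Finset.sum_sigma]
    refine Finset.sum_congr rfl fun p _ => ?_
    rw [G, D, D, Finset.sum_mul_sum, Finset.sum_product]
  rw [hRHS, D]
  refine Finset.sum_nbij' (i := fun l => ⟨(fh l, n - fh l), (l.take (fh l), l.drop (fh l))⟩)
    (j := fun x => x.2.1 ++ x.2.2) ?_ ?_ ?_ ?_ ?_
  · -- forward membership
    intro l hl
    obtain ⟨hlf, hdom⟩ := Finset.mem_filter.1 hl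
    obtain ⟨hlen, hent⟩ := mem_LF.1 hlf
    obtain ⟨hfh1, hfh2, hfh3⟩ := fh_spec hdom
    set T := fh l with hT
    have hTn : T ≤ n := by omega
    refine Finset.mem_sigma.2 ⟨Finset.HasAntidiagonal.mem_antidiagonal.2 (show T + (n - T) = n by omega), ?_⟩
    have hsumtake : (l.take T).sum + 1 = T := by
      have h2 := hfh2
      rw [dz] at h2
      omega
    have hsum_split : (l.take T).sum + (l.drop T).sum = l.sum := by
      rw [← List.sum_append, List.take_append_drop]
    have hsuml : l.sum + (j + 1) = n := by
      have := hdom.1; omega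
    refine Finset.mem_product.2 ⟨Finset.mem_filter.2 ⟨?_, ?_, ?_⟩, Finset.mem_filter.2 ⟨?_, ?_, ?_⟩⟩
    · -- take ∈ LF α T
      rw [mem_LF]
      refine ⟨?_, fun x hx => hent x (List.take_subset _ _ hx)⟩
      show (l.take T).length = T
      rw [List.length_take]
      omega
    · -- Dom 1 sum cond of take
      show (l.take T).sum + 1 = (l.take T).length
      rw [List.length_take]
      omega
    · -- Dom 1 prefix cond of take
      show ∀ s < (l.take T).length, -(1:ℤ) < dz (l.take T) s
      intro s hs
      rw [List.length_take] at hs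
      have hsT : s < T := by omega
      have h3 := hfh3 s hsT
      have he : (l.take T).take s = l.take s := by
        rw [List.take_take, min_eq_left (le_of_lt hsT)]
      rw [dz, he]
      rw [dz] at h3
      omega
    · -- drop ∈ LF
      rw [mem_LF]
      refine ⟨?_, fun x hx => hent x (List.drop_subset _ _ hx)⟩
      show (l.drop T).length = n - T
      rw [List.length_drop, hlen]
    · -- Dom j sum cond of drop
      show (l.drop T).sum + j = (l.drop T).length
      rw [List.length_drop]
      omega
    · -- Dom j prefix cond of drop
      show ∀ s < (l.drop T).length, -(j:ℤ) < dz (l.drop T) s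
      intro s hs
      rw [List.length_drop] at hs
      have h4 : dz (l.drop T) s = dz l (T + s) - dz l T := dz_drop l T s
      have h5 := hdom.2 (T + s) (by omega)
      rw [h4, hfh2]
      omega
  · -- backward membership
    rintro ⟨⟨p1, p2⟩, a, b⟩ hx
    obtain ⟨hp, hab⟩ := Finset.mem_sigma.1 hx
    obtain ⟨ha, hb⟩ := Finset.mem_product.1 hab
    obtain ⟨haf, hadom⟩ := Finset.mem_filter.1 ha
    obtain ⟨hbf, hbdom⟩ := Finset.mem_filter.1 hb
    dsimp only at haf hbf hadom hbdom hp ⊢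
    obtain ⟨halen, haent⟩ := mem_LF.1 haf
    obtain ⟨hblen, hbent⟩ := mem_LF.1 hbf
    have hpn : p1 + p2 = n := Finset.HasAntidiagonal.mem_antidiagonal.1 hp
    have hasum : a.sum + 1 = a.length := hadom.1
    have hbsum : b.sum + j = b.length := hbdom.1
    refine Finset.mem_filter.2 ⟨mem_LF.2 ⟨by rw [List.length_append]; omega, ?_⟩, ?_, ?_⟩
    · intro x hx'
      rcases List.mem_append.1 hx' with h | h
      exacts [haent x h, hbent x h]
    · show (a ++ b).sum + (j + 1) = (a ++ b).length
      rw [List.sum_append, List.length_append]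
      omega
    · show ∀ t < (a ++ b).length, -((j:ℤ) + 1) < dz (a ++ b) t
      intro t ht
      rw [List.length_append] at ht
      rcases lt_trichotomy t a.length with h | h | h
      · rw [dz_take_le (le_of_lt h)]
        have := hadom.2 t (by omega)
        omega
      · subst h
        have hbl : 0 < b.length := by omega
        have hj1 : 1 ≤ j := Dom_nil_length hbdom hbl
        rw [dz_take_le le_rfl]
        have hml : dz a a.length = -1 := by
          rw [dz, List.take_length]; omega
        omega
      · have hs : t = a.length + (t - a.length) := by omega
        rw [hs, dz_append]
        have h6 : dz a a.length = -1 := by rw [dz, List.take_length]; omega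
        have h7 := hbdom.2 (t - a.length) (by omega)
        omega
  · -- left inverse
    intro l hl
    simp only [List.take_append_drop]
  · -- right inverse
    rintro ⟨⟨p1, p2⟩, a, b⟩ hx
    obtain ⟨hp, hab⟩ := Finset.mem_sigma.1 hx
    obtain ⟨ha, hb⟩ := Finset.mem_product.1 hab
    obtain ⟨haf, hadom⟩ := Finset.mem_filter.1 ha
    obtain ⟨hbf, hbdom⟩ := Finset.mem_filter.1 hb
    dsimp only at haf hbf hadom hbdom hp ⊢
    obtain ⟨halen, haent⟩ := mem_LF.1 haf
    obtain ⟨hblen, hbent⟩ := mem_LF.1 hbf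
    have hpn : p1 + p2 = n := Finset.HasAntidiagonal.mem_antidiagonal.1 hp
    have hasum : a.sum + 1 = a.length := hadom.1
    have hbsum : b.sum + j = b.length := hbdom.1
    have hfh : fh (a ++ b) = a.length := by
      refine fh_eq ⟨by rw [List.length_append]; omega, ?_, ?_⟩
      · rw [dz_take_le le_rfl, dz, List.take_length]
        omega
      · intro s hs
        rw [dz_take_le (le_of_lt hs)]
        have := hadom.2 s (by omega)
        omega
    have h1 : (a ++ b).take (fh (a ++ b)) = a := by rw [hfh, List.take_left]
    have h2 : (a ++ b).drop (fh (a ++ b)) = b := by rw [hfh, List.drop_left]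
    rw [h1, h2, hfh]
    have e1 : n - a.length = p2 := by omega
    rw [e1, halen]
  · -- weights
    intro l hl
    dsimp only
    rw [← wgt_append, List.take_append_drop]

lemma G_succ (α n : ℕ) :
    G α (n + 1) = ∑ γ ∈ Finset.range α, ((γ.factorial : ℝ))⁻¹ * D α γ n := by
  classical
  have hRHS : ∑ γ ∈ Finset.range α, ((γ.factorial : ℝ))⁻¹ * D α γ n
      = ∑ x ∈ (Finset.range α).sigma (fun γ => (LF α n).filter (Dom γ)),
          ((x.1.factorial : ℝ))⁻¹ * wgt x.2 := by
    rw [Finset.sum_sigma]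
    refine Finset.sum_congr rfl fun γ _ => ?_
    rw [D, Finset.mul_sum]
  rw [hRHS, G, D]
  refine Finset.sum_nbij' (i := fun l => ⟨l.headI, l.tail⟩) (j := fun x => x.1 :: x.2)
    ?_ ?_ ?_ ?_ ?_
  · intro l hl
    obtain ⟨hlf, hdom⟩ := Finset.mem_filter.1 hl
    obtain ⟨hlen, hent⟩ := mem_LF.1 hlf
    obtain ⟨x, b, rfl⟩ : ∃ x b, l = x :: b := by
      cases l with
      | nil => simp at hlen
      | cons x b => exact ⟨x, b, rfl⟩
    simp only [List.headI_cons, List.tail_cons]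
    have hsum : (x :: b).sum + 1 = n + 1 := by rw [← hlen]; exact hdom.1
    rw [List.sum_cons] at hsum
    have hblen : b.length = n := by simpa using hlen
    refine Finset.mem_sigma.2 ⟨Finset.mem_range.2 (hent x (by simp)), Finset.mem_filter.2
      ⟨mem_LF.2 ⟨hblen, fun y hy => hent y (by simp [hy])⟩, ?_, ?_⟩⟩
    · show b.sum + x = b.length
      omega
    · show ∀ s < b.length, -(x:ℤ) < dz b s
      intro s hs
      have h2 := hdom.2 (s + 1) (by simp only [List.length_cons]; omega)
      rw [dz_cons] at h2
      omega
  · rintro ⟨γ, b⟩ hx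
    obtain ⟨hγ, hb⟩ := Finset.mem_sigma.1 hx
    rw [Finset.mem_range] at hγ
    obtain ⟨hbf, hbdom⟩ := Finset.mem_filter.1 hb
    obtain ⟨hblen, hbent⟩ := mem_LF.1 hbf
    have hbsum : b.sum + γ = b.length := hbdom.1
    refine Finset.mem_filter.2 ⟨mem_LF.2 ⟨by simp [hblen], ?_⟩, ?_, ?_⟩
    · intro y hy
      rcases List.mem_cons.1 hy with h | h
      · subst h; exact hγ
      · exact hbent y h
    · simp only [List.sum_cons, List.length_cons]
      omega
    · intro t ht
      simp only [List.length_cons, hblen] at ht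
      cases t with
      | zero => rw [dz_zero]; omega
      | succ s =>
        rw [dz_cons]
        have := hbdom.2 s (by omega)
        omega
  · intro l hl
    obtain ⟨hlf, -⟩ := Finset.mem_filter.1 hl
    obtain ⟨hlen, -⟩ := mem_LF.1 hlf
    cases l with
    | nil => simp at hlen
    | cons x b => simp
  · rintro ⟨γ, b⟩ -
    simp
  · intro l hl
    obtain ⟨hlf, -⟩ := Finset.mem_filter.1 hl
    obtain ⟨hlen, -⟩ := mem_LF.1 hlf
    cases l with
    | nil => simp at hlen
    | cons x b => simp [wgt_cons]

lemma G_nonneg (α n : ℕ) : 0 ≤ G α n := D_nonneg α 1 n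

lemma G_one (α : ℕ) (hα : 1 ≤ α) : G α 1 = 1 := by
  rw [show (1:ℕ) = 0 + 1 from rfl, G_succ]
  rw [Finset.sum_congr rfl (fun γ _ => by rw [D_right_zero])]
  rw [Finset.sum_congr rfl (fun γ _ => by rw [mul_ite, mul_one, mul_zero]),
    Finset.sum_ite_eq' (Finset.range α) 0 (fun γ => ((γ.factorial:ℝ))⁻¹)]
  rw [if_pos (Finset.mem_range.2 (by omega))]
  simp

/-- the sum in the definition of `rootedTrees` as a sum over words -/
lemma A_eq (α k : ℕ) :
    ∑ f ∈ (Fintype.piFinset fun _ : Fin (k+1) => Finset.range α) |>.filter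
        (fun f => ∑ i, f i = k),
      ∏ i, (1 : ℝ) / (Nat.factorial (f i))
    = ∑ l ∈ (LF α (k+1)).filter (fun l => l.sum + 1 = k + 1), wgt l := by
  classical
  refine Finset.sum_bij (i := fun f _ => List.ofFn f) ?_ ?_ ?_ ?_
  · intro f hf
    obtain ⟨hf1, hf2⟩ := Finset.mem_filter.1 hf
    refine Finset.mem_filter.2 ⟨Finset.mem_image.2 ⟨f, hf1, rfl⟩, ?_⟩
    rw [List.sum_ofFn]
    omega
  · intro f1 h1 f2 h2 he
    exact List.ofFn_injective he
  · intro l hl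
    obtain ⟨hl1, hl2⟩ := Finset.mem_filter.1 hl
    obtain ⟨f, hf, rfl⟩ := Finset.mem_image.1 hl1
    refine ⟨f, Finset.mem_filter.2 ⟨hf, ?_⟩, rfl⟩
    rw [List.sum_ofFn] at hl2
    omega
  · intro f hf
    rw [wgt, List.map_ofFn, List.prod_ofFn]
    refine Finset.prod_congr rfl fun i _ => ?_
    rw [one_div]
    rfl

lemma rootedTrees_eq_G (α k : ℕ) : rootedTrees α (k + 2) = G α (k + 1) := by
  have h1 : k + 2 - 1 = k + 1 := rfl
  have h2 : k + 2 - 2 = k := by omega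
  rw [rootedTrees, h1, h2, A_eq, cycle_count]
  have : ((k:ℝ) + 2 - 1) = (k + 1 : ℕ) := by push_cast; ring
  push_cast
  have hne : ((k:ℝ) + 1) ≠ 0 := by positivity
  have : (k:ℝ) + 2 - 1 = (k:ℝ) + 1 := by ring
  rw [this, one_div, ← mul_assoc, inv_mul_cancel₀ (by positivity), one_mul]

lemma truncExp_continuous (α : ℕ) : Continuous (truncExp α) := by
  unfold truncExp
  exact continuous_finset_sum _ fun γ _ => (continuous_pow γ).div_const _

lemma truncExp_zero_eval {α : ℕ} (hα : 1 ≤ α) : truncExp α 0 = 1 := by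
  unfold truncExp
  rw [Finset.sum_eq_single 0]
  · simp
  · intro γ hγ hne
    rw [zero_pow hne, zero_div]
  · intro h
    exact absurd (Finset.mem_range.2 (by omega)) h

lemma one_le_truncExp {α : ℕ} (hα : 1 ≤ α) {R : ℝ} (hR : 0 ≤ R) : 1 ≤ truncExp α R := by
  unfold truncExp
  have h0 : (0:ℕ) ∈ Finset.range α := Finset.mem_range.2 (by omega)
  calc (1:ℝ) = R ^ 0 / (Nat.factorial 0) := by simp
  _ ≤ _ := Finset.single_le_sum (f := fun γ => R ^ γ / (Nat.factorial γ))
      (fun γ _ => by positivity) h0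

lemma truncExp_pos {α : ℕ} (hα : 1 ≤ α) {R : ℝ} (hR : 0 ≤ R) : 0 < truncExp α R :=
  lt_of_lt_of_le one_pos (one_le_truncExp hα hR)

lemma truncExp_mono {α : ℕ} {R1 R2 : ℝ} (h0 : 0 ≤ R1) (h : R1 ≤ R2) :
    truncExp α R1 ≤ truncExp α R2 := by
  unfold truncExp
  refine Finset.sum_le_sum fun γ _ => ?_
  have hfac : (0:ℝ) < (Nat.factorial γ : ℝ) := by positivity
  exact div_le_div_of_nonneg_right (pow_le_pow_left₀ h0 h γ) hfac.le |>.trans_eq rfl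

lemma truncExp_succ (α : ℕ) (R : ℝ) :
    truncExp (α + 1) R = truncExp α R + R ^ α / (Nat.factorial α) := by
  unfold truncExp
  rw [Finset.sum_range_succ]

lemma hasDerivAt_truncExp (α : ℕ) (R : ℝ) :
    HasDerivAt (truncExp (α + 1)) (truncExp α R) R := by
  have h : ∀ γ ∈ Finset.range (α + 1), HasDerivAt (fun R : ℝ => R ^ γ / (Nat.factorial γ))
      ((γ : ℝ) * R ^ (γ - 1) / (Nat.factorial γ)) R := by
    intro γ _
    simpa [div_eq_mul_inv] using (hasDerivAt_pow γ R).div_const (Nat.factorial γ : ℝ)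
  have hsum := HasDerivAt.fun_sum h
  have he : ∑ γ ∈ Finset.range (α + 1), (γ : ℝ) * R ^ (γ - 1) / (Nat.factorial γ)
      = truncExp α R := by
    rw [Finset.sum_range_succ']
    simp only [Nat.cast_zero, zero_mul, zero_div, add_zero]
    unfold truncExp
    refine Finset.sum_congr rfl fun γ _ => ?_
    rw [Nat.factorial_succ, Nat.add_sub_cancel]
    push_cast
    have h1 : (γ:ℝ) + 1 ≠ 0 := by positivity
    have h2 : (Nat.factorial γ : ℝ) ≠ 0 := by positivity
    field_simp
  rw [← he]
  exact hsum

lemma D_pow_bound (α : ℕ) {β : ℝ} (hβ : 0 ≤ β) (γ N : ℕ) :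
    ∑ m ∈ Finset.range N, D α γ m * β ^ m
      ≤ (∑ m ∈ Finset.range N, G α m * β ^ m) ^ γ := by
  induction γ with
  | zero =>
    rw [pow_zero]
    have he : ∑ m ∈ Finset.range N, D α 0 m * β ^ m
        = ∑ m ∈ Finset.range N, (if m = 0 then β ^ m else 0) := by
      refine Finset.sum_congr rfl fun m _ => ?_
      rw [D_left_zero]
      split_ifs <;> simp
    rw [he, Finset.sum_ite_eq' (Finset.range N) 0 (fun m => β ^ m)]
    split_ifs
    · simp
    · norm_num
  | succ γ ih =>
    have hnn : ∀ p : ℕ × ℕ, 0 ≤ (G α p.1 * β ^ p.1) * (D α γ p.2 * β ^ p.2) := by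
      intro p
      have := G_nonneg α p.1
      have := D_nonneg α γ p.2
      positivity
    have hGnn : 0 ≤ ∑ m ∈ Finset.range N, G α m * β ^ m := by
      refine Finset.sum_nonneg fun m _ => ?_
      have := G_nonneg α m
      positivity
    have step1 : ∑ m ∈ Finset.range N, D α (γ + 1) m * β ^ m
        = ∑ m ∈ Finset.range N, ∑ p ∈ Finset.HasAntidiagonal.antidiagonal m,
            (G α p.1 * β ^ p.1) * (D α γ p.2 * β ^ p.2) := by
      refine Finset.sum_congr rfl fun m _ => ?_
      rw [D_succ, Finset.sum_mul]
      refine Finset.sum_congr rfl fun p hp => ?_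
      have hpm := Finset.HasAntidiagonal.mem_antidiagonal.1 hp
      rw [← hpm, pow_add]
      ring
    have hdisj : (↑(Finset.range N) : Set ℕ).PairwiseDisjoint Finset.HasAntidiagonal.antidiagonal := by
      intro m _ m' _ hne
      refine Finset.disjoint_left.2 fun p hp hp' => ?_
      have h1 := Finset.HasAntidiagonal.mem_antidiagonal.1 hp
      have h2 := Finset.HasAntidiagonal.mem_antidiagonal.1 hp'
      omega
    have step2 : ∑ m ∈ Finset.range N, ∑ p ∈ Finset.HasAntidiagonal.antidiagonal m,
          (G α p.1 * β ^ p.1) * (D α γ p.2 * β ^ p.2)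
        = ∑ p ∈ (Finset.range N).biUnion Finset.HasAntidiagonal.antidiagonal,
            (G α p.1 * β ^ p.1) * (D α γ p.2 * β ^ p.2) :=
      (Finset.sum_biUnion hdisj).symm
    have hsub : (Finset.range N).biUnion Finset.HasAntidiagonal.antidiagonal
        ⊆ Finset.range N ×ˢ Finset.range N := by
      intro p hp
      obtain ⟨m, hm, hpm⟩ := Finset.mem_biUnion.1 hp
      rw [Finset.mem_range] at hm
      have := Finset.HasAntidiagonal.mem_antidiagonal.1 hpm
      refine Finset.mem_product.2 ⟨Finset.mem_range.2 (by omega), Finset.mem_range.2 (by omega)⟩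
    calc ∑ m ∈ Finset.range N, D α (γ + 1) m * β ^ m
        = ∑ p ∈ (Finset.range N).biUnion Finset.HasAntidiagonal.antidiagonal,
            (G α p.1 * β ^ p.1) * (D α γ p.2 * β ^ p.2) := by rw [step1, step2]
      _ ≤ ∑ p ∈ Finset.range N ×ˢ Finset.range N,
            (G α p.1 * β ^ p.1) * (D α γ p.2 * β ^ p.2) :=
          Finset.sum_le_sum_of_subset_of_nonneg hsub (fun p _ _ => hnn p)
      _ = (∑ m ∈ Finset.range N, G α m * β ^ m) * (∑ m ∈ Finset.range N, D α γ m * β ^ m) := by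
          rw [Finset.sum_mul_sum, Finset.sum_product]
      _ ≤ (∑ m ∈ Finset.range N, G α m * β ^ m) * (∑ m ∈ Finset.range N, G α m * β ^ m) ^ γ :=
          mul_le_mul_of_nonneg_left ih hGnn
      _ = (∑ m ∈ Finset.range N, G α m * β ^ m) ^ (γ + 1) := (pow_succ' _ _).symm

lemma partial_le_fixed (α : ℕ) {β x : ℝ} (hβ : 0 < β) (hx0 : 0 ≤ x)
    (hfix : x = β * truncExp α x) :
    ∀ N, ∑ m ∈ Finset.range N, G α m * β ^ m ≤ x := by
  intro N
  induction N with
  | zero => simpa using hx0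
  | succ N ih =>
    have hS0 : 0 ≤ ∑ m ∈ Finset.range N, G α m * β ^ m := by
      refine Finset.sum_nonneg fun m _ => ?_
      have := G_nonneg α m
      positivity
    rw [Finset.sum_range_succ', G_zero, zero_mul, add_zero]
    have step1 : ∑ m ∈ Finset.range N, G α (m + 1) * β ^ (m + 1)
        = ∑ γ ∈ Finset.range α, (β * ((γ.factorial : ℝ))⁻¹)
            * ∑ m ∈ Finset.range N, D α γ m * β ^ m := by
      have e1 : ∀ m, G α (m + 1) * β ^ (m + 1)
          = ∑ γ ∈ Finset.range α, (β * ((γ.factorial : ℝ))⁻¹) * (D α γ m * β ^ m) := by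
        intro m
        rw [G_succ, Finset.sum_mul]
        refine Finset.sum_congr rfl fun γ _ => ?_
        rw [pow_succ]
        ring
      rw [Finset.sum_congr rfl fun m _ => e1 m, Finset.sum_comm]
      exact Finset.sum_congr rfl fun γ _ => (Finset.mul_sum _ _ _).symm
    rw [step1]
    have hfpos : ∀ γ : ℕ, (0:ℝ) ≤ β * ((γ.factorial : ℝ))⁻¹ := by
      intro γ
      positivity
    calc ∑ γ ∈ Finset.range α, (β * ((γ.factorial : ℝ))⁻¹)
            * ∑ m ∈ Finset.range N, D α γ m * β ^ m
        ≤ ∑ γ ∈ Finset.range α, (β * ((γ.factorial : ℝ))⁻¹)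
            * (∑ m ∈ Finset.range N, G α m * β ^ m) ^ γ :=
          Finset.sum_le_sum fun γ _ =>
            mul_le_mul_of_nonneg_left (D_pow_bound α hβ.le γ N) (hfpos γ)
      _ ≤ ∑ γ ∈ Finset.range α, (β * ((γ.factorial : ℝ))⁻¹) * x ^ γ :=
          Finset.sum_le_sum fun γ _ =>
            mul_le_mul_of_nonneg_left (pow_le_pow_left₀ hS0 ih γ) (hfpos γ)
      _ = β * truncExp α x := by
          rw [truncExp, Finset.mul_sum]
          refine Finset.sum_congr rfl fun γ _ => ?_
          rw [div_eq_mul_inv]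
          ring
      _ = x := hfix.symm

set_option maxHeartbeats 1000000 in
lemma D_tsum_pow (α : ℕ) {β : ℝ} (hsum : Summable (fun m => G α m * β ^ m)) (γ : ℕ) :
    Summable (fun m => D α γ m * β ^ m) ∧
      ∑' m, D α γ m * β ^ m = (∑' m, G α m * β ^ m) ^ γ := by
  induction γ with
  | zero =>
    have he : (fun m => D α 0 m * β ^ m) = fun m : ℕ => if m = 0 then 1 else 0 := by
      funext m
      rw [D_left_zero]
      split_ifs with h <;> simp [h]
    rw [he]
    constructor
    · refine summable_of_ne_finset_zero (s := {0}) fun m hm => ?_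
      rw [if_neg (by simpa using hm)]
    · rw [tsum_eq_single 0 (fun m hm => if_neg hm), if_pos rfl, pow_zero]
  | succ γ ih =>
    obtain ⟨ihs, ihe⟩ := ih
    have hGn : Summable fun m => ‖G α m * β ^ m‖ := summable_norm_iff.2 hsum
    have hDn : Summable fun m => ‖D α γ m * β ^ m‖ := summable_norm_iff.2 ihs
    have hkey : ∀ n, ∑ kl ∈ Finset.HasAntidiagonal.antidiagonal n,
          (G α kl.1 * β ^ kl.1) * (D α γ kl.2 * β ^ kl.2) = D α (γ + 1) n * β ^ n := by
      intro n
      rw [D_succ, Finset.sum_mul]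
      refine Finset.sum_congr rfl fun p hp => ?_
      have hpm := Finset.HasAntidiagonal.mem_antidiagonal.1 hp
      rw [← hpm, pow_add]
      ring
    constructor
    · exact (Summable.of_norm (summable_norm_sum_mul_antidiagonal_of_summable_norm hGn hDn)).congr hkey
    · calc ∑' m, D α (γ + 1) m * β ^ m
          = ∑' n, ∑ kl ∈ Finset.HasAntidiagonal.antidiagonal n,
              (G α kl.1 * β ^ kl.1) * (D α γ kl.2 * β ^ kl.2) := (tsum_congr hkey).symm
        _ = (∑' m, G α m * β ^ m) * (∑' m, D α γ m * β ^ m) :=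
            (tsum_mul_tsum_eq_tsum_sum_antidiagonal_of_summable_norm hGn hDn).symm
        _ = (∑' m, G α m * β ^ m) * (∑' m, G α m * β ^ m) ^ γ := by rw [ihe]
        _ = (∑' m, G α m * β ^ m) ^ (γ + 1) := (pow_succ' _ _).symm

end BP

open BP

/-- **Subcritical behaviour of the rooted branched-polymer partition function.**
Let `α ≥ 3`, `R_c` the unique positive solution of
`(R − 1)·g_α(R) = R^α/(α−1)!`, and `β_c = R_c/g_α(R_c)`.  Then for every
`0 < β < β_c` the series `R(β) = Σ_{n≥2} r_α(n)·β^{n−1}` converges, its sum `S`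
satisfies `0 < S < R_c`, and `S` is the unique solution in `(0, R_c)` of the
equation `S = β·g_α(S)`. -/
theorem branched_polymer_subcritical (α : ℕ) (hα : 3 ≤ α) (Rc : ℝ) (hRc : 0 < Rc)
    (heq : (Rc - 1) * truncExp α Rc = Rc ^ α / (Nat.factorial (α - 1)))
    (huniq : ∀ R : ℝ, 0 < R →
        (R - 1) * truncExp α R = R ^ α / (Nat.factorial (α - 1)) → R = Rc)
    (β : ℝ) (hβ0 : 0 < β) (hβc : β < Rc / truncExp α Rc) :
    Summable (fun k : ℕ => rootedTrees α (k + 2) * β ^ (k + 1)) ∧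
    0 < ∑' k : ℕ, rootedTrees α (k + 2) * β ^ (k + 1) ∧
    (∑' k : ℕ, rootedTrees α (k + 2) * β ^ (k + 1)) < Rc ∧
    (∑' k : ℕ, rootedTrees α (k + 2) * β ^ (k + 1))
      = β * truncExp α (∑' k : ℕ, rootedTrees α (k + 2) * β ^ (k + 1)) ∧
    (∀ y : ℝ, 0 < y → y < Rc → y = β * truncExp α y →
      y = ∑' k : ℕ, rootedTrees α (k + 2) * β ^ (k + 1)) := by
  classical
  have hα1 : 1 ≤ α := by omega
  obtain ⟨α', rfl⟩ : ∃ α', α = α' + 1 := ⟨α - 1, by omega⟩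
  set α := α' + 1 with hαdef
  have hα'1 : 1 ≤ α' := by omega
  -- positivity of the truncated exponential
  have gpos : ∀ R : ℝ, 0 ≤ R → 0 < truncExp α R := fun R hR => truncExp_pos hα1 hR
  -- the auxiliary function h
  set h : ℝ → ℝ := fun R => (1 - R) * truncExp α R + R ^ α / (Nat.factorial α') with hh
  have hcont : Continuous h := by
    rw [hh]
    exact (((continuous_const.sub continuous_id).mul (truncExp_continuous α)).add
      ((continuous_pow α).div_const _))
  have h0 : h 0 = 1 := by
    rw [hh]
    simp [truncExp_zero_eval hα1, zero_pow (by omega : α ≠ 0)]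
  have hfaceq : α - 1 = α' := by omega
  have hpos : ∀ R : ℝ, 0 ≤ R → R < Rc → 0 < h R := by
    intro R hR0 hRRc
    by_contra hle
    push_neg at hle
    have hmem : (0:ℝ) ∈ Set.Icc (h R) (h 0) := ⟨hle, by rw [h0]; norm_num⟩
    obtain ⟨R', hR', hhR'⟩ := intermediate_value_Icc' hR0 hcont.continuousOn hmem
    have hR'0 : R' ≠ 0 := by
      intro he
      rw [he, h0] at hhR'
      norm_num at hhR'
    have hR'pos : 0 < R' := lt_of_le_of_ne hR'.1 (Ne.symm hR'0)
    have : R' = Rc := by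
      refine huniq R' hR'pos ?_
      rw [hfaceq]
      rw [hh] at hhR'
      simp only at hhR'
      linarith
    have hcon : R' ≤ R := hR'.2
    rw [this] at hcon
    linarith
  -- the ratio map q and its strict monotonicity
  set q : ℝ → ℝ := fun R => R / truncExp α R with hq
  have hqcont : ContinuousOn q (Set.Icc 0 Rc) :=
    ContinuousOn.div continuous_id.continuousOn (truncExp_continuous α).continuousOn
      (fun R hR => (gpos R hR.1).ne')
  have hqmono : StrictMonoOn q (Set.Icc 0 Rc) := by
    refine strictMonoOn_of_deriv_pos (convex_Icc 0 Rc) hqcont ?_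
    intro R hR
    rw [interior_Icc] at hR
    have hgR : 0 < truncExp α R := gpos R hR.1.le
    have hd : HasDerivAt q ((1 * truncExp α R - R * truncExp α' R) / (truncExp α R) ^ 2) R :=
      (hasDerivAt_id R).div (hasDerivAt_truncExp α' R) hgR.ne'
    have hnum : 1 * truncExp α R - R * truncExp α' R = h R := by
      have hs := truncExp_succ α' R
      rw [hh]
      simp only
      rw [pow_succ]
      have : truncExp α' R = truncExp α R - R ^ α' / (Nat.factorial α') := by
        rw [hs]; ring
      rw [this]
      field_simp
      ring
    rw [hd.deriv, hnum]
    exact div_pos (hpos R hR.1.le hR.2) (pow_pos hgR 2)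
  have hq0 : q 0 = 0 := by rw [hq]; simp
  have hqRc : q Rc = Rc / truncExp α Rc := rfl
  -- existence of the fixed point x
  obtain ⟨x, hx, hqx⟩ := intermediate_value_Ioo hRc.le hqcont
    (show β ∈ Set.Ioo (q 0) (q Rc) by rw [hq0, hqRc]; exact ⟨hβ0, hβc⟩)
  have hgx : 0 < truncExp α x := gpos x hx.1.le
  have hxfix : x = β * truncExp α x := (div_eq_iff hgx.ne').1 hqx
  -- the series
  set F : ℕ → ℝ := fun m => G α m * β ^ m with hF
  have hFnn : ∀ m, 0 ≤ F m := by
    intro m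
    have := G_nonneg α m
    rw [hF]
    positivity
  have hbound : ∀ N, ∑ m ∈ Finset.range N, F m ≤ x := fun N =>
    partial_le_fixed α hβ0 hx.1.le hxfix N
  have hFsum : Summable F := summable_of_sum_range_le hFnn hbound
  have hTx : ∑' m, F m ≤ x := Real.tsum_le_of_sum_range_le hFnn hbound
  have hTnn : 0 ≤ ∑' m, F m := tsum_nonneg hFnn
  -- re-express the statement's series
  have hre : (fun k : ℕ => rootedTrees α (k + 2) * β ^ (k + 1)) = fun k => F (k + 1) := by
    funext k
    rw [hF]
    simp only
    rw [rootedTrees_eq_G]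
  have hWsum : Summable (fun k : ℕ => F (k + 1)) := (summable_nat_add_iff 1).2 hFsum
  have hTW : ∑' m, F m = ∑' k, F (k + 1) := by
    rw [Summable.tsum_eq_zero_add hFsum]
    have : F 0 = 0 := by rw [hF]; simp [G_zero]
    rw [this, zero_add]
  set T := ∑' m, F m with hT
  -- functional equation
  have hfe : T = β * truncExp α T := by
    have e1 : ∀ m : ℕ, F (m + 1)
        = ∑ γ ∈ Finset.range α, (β * ((γ.factorial : ℝ))⁻¹) * (D α γ m * β ^ m) := by
      intro m
      rw [hF]
      simp only
      rw [G_succ, Finset.sum_mul]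
      refine Finset.sum_congr rfl fun γ _ => ?_
      rw [pow_succ]
      ring
    have hsumγ : ∀ γ ∈ Finset.range α,
        Summable (fun m : ℕ => (β * ((γ.factorial : ℝ))⁻¹) * (D α γ m * β ^ m)) :=
      fun γ _ => ((D_tsum_pow α hFsum γ).1).mul_left _
    calc T = ∑' k, F (k + 1) := hTW
      _ = ∑' m, ∑ γ ∈ Finset.range α, (β * ((γ.factorial : ℝ))⁻¹) * (D α γ m * β ^ m) :=
          tsum_congr e1
      _ = ∑ γ ∈ Finset.range α, ∑' m, (β * ((γ.factorial : ℝ))⁻¹) * (D α γ m * β ^ m) :=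
          Summable.tsum_finsetSum hsumγ
      _ = ∑ γ ∈ Finset.range α, (β * ((γ.factorial : ℝ))⁻¹) * ∑' m, D α γ m * β ^ m :=
          Finset.sum_congr rfl fun γ _ => tsum_mul_left
      _ = ∑ γ ∈ Finset.range α, (β * ((γ.factorial : ℝ))⁻¹) * T ^ γ :=
          Finset.sum_congr rfl fun γ _ => by rw [(D_tsum_pow α hFsum γ).2]
      _ = β * truncExp α T := by
          rw [truncExp, Finset.mul_sum]
          refine Finset.sum_congr rfl fun γ _ => ?_
          rw [div_eq_mul_inv]
          ring
  -- positivity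
  have hTpos : 0 < T := by
    have h1 : F 1 ≤ T := Summable.le_tsum hFsum 1 (fun m _ => hFnn m)
    have h2 : F 1 = β := by
      rw [hF]
      simp [G_one α hα1]
    linarith
  have hTRc : T < Rc := lt_of_le_of_lt hTx hx.2
  -- uniqueness
  have huniq2 : ∀ y : ℝ, 0 < y → y < Rc → y = β * truncExp α y → y = T := by
    intro y hy0 hyRc hyfix
    have hgy : 0 < truncExp α y := gpos y hy0.le
    have hqy : q y = β := by
      rw [hq]
      simp only
      rw [div_eq_iff hgy.ne']
      exact hyfix
    have hqT : q T = β := by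
      rw [hq]
      simp only
      rw [div_eq_iff (gpos T hTnn).ne']
      exact hfe
    exact hqmono.injOn ⟨hy0.le, hyRc.le⟩ ⟨hTnn, hTRc.le⟩ (hqy.trans hqT.symm)
  rw [hre]
  rw [← hTW]
  exact ⟨hWsum, hTpos, hTRc, hfe, huniq2⟩
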